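/- Let A ∈ ℝ^{n×n}, B ∈ ℝ^{n×m}, Q ∈ ℝ^{n×n} symmetric positive semidefinite, R ∈ ℝ^{m×m} symmetric positive definite, and S ∈ ℝ^{n×n} symmetric positive semidefinite satisfying the discrete algebraic Riccati equation S = A^T S A − A^T S B (B^T S B + R)^{−1} B^T S A + Q. Set K = −(B^T S B + R)^{−1} B^T S A. Then for every v ∈ ℝ^n and π ∈ ℝ^n there exists a constant c ∈ ℝ (independent of x) such that for all x ∈ ℝ^n, min over u ∈ ℝ^m of [ x^T Q x + u^T R u + (A x + B u + v)^T S (A x + B u + v) + 2 π^T (A + B K) (A x + B u + v) ] equals x^T S x + 2 Π^T (A + B K) x + c, where Π = (A + B K)^T π + S v. -/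

import Mathlib

open Matrix
lemma shift {p q : ℕ} (N : Matrix (Fin p) (Fin q) ℝ) (a : Fin q → ℝ) (b : Fin p → ℝ) :
    (N *ᵥ a) ⬝ᵥ b = a ⬝ᵥ (Nᵀ *ᵥ b) := by
  rw [dotProduct_mulVec, vecMul_transpose]
lemma sw {p q : ℕ} (C : Matrix (Fin p) (Fin q) ℝ) (a : Fin p → ℝ) (b : Fin q → ℝ) :
    a ⬝ᵥ (C *ᵥ b) = b ⬝ᵥ (Cᵀ *ᵥ a) := by
  rw [← shift]; exact dotProduct_comm _ _


set_option maxHeartbeats 2000000 in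
/-- if `S` solves the discrete algebraic Riccati equation, then for
every `v` and `π` there is a constant `c` (independent of `x`) such that the
minimum over `u` of the one-stage Bellman expression equals
`xᵀSx + 2Πᵀ(A+BK)x + c` with `Π = (A+BK)ᵀπ + Sv`. -/
theorem stmt14
    (n m : ℕ)
    (A : Matrix (Fin n) (Fin n) ℝ) (B : Matrix (Fin n) (Fin m) ℝ)
    (Q S : Matrix (Fin n) (Fin n) ℝ) (R : Matrix (Fin m) (Fin m) ℝ)
    (hQ : Q.PosSemidef) (hR : R.PosDef) (hS : S.PosSemidef)
    (hRic : S = Aᵀ * S * A - Aᵀ * S * B * (Bᵀ * S * B + R)⁻¹ * Bᵀ * S * A + Q) :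
    let K := -((Bᵀ * S * B + R)⁻¹ * Bᵀ * S * A)
    ∀ v piv : Fin n → ℝ, ∃ c : ℝ, ∀ x : Fin n → ℝ,
      IsLeast
        (Set.range (fun u : Fin m → ℝ =>
          x ⬝ᵥ (Q *ᵥ x) + u ⬝ᵥ (R *ᵥ u)
            + (A *ᵥ x + B *ᵥ u + v) ⬝ᵥ (S *ᵥ (A *ᵥ x + B *ᵥ u + v))
            + 2 * (piv ⬝ᵥ ((A + B * K) *ᵥ (A *ᵥ x + B *ᵥ u + v)))))
        (x ⬝ᵥ (S *ᵥ x)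
          + 2 * (((A + B * K)ᵀ *ᵥ piv + S *ᵥ v) ⬝ᵥ ((A + B * K) *ᵥ x)) + c) := by
  intro K v piv
  set M : Matrix (Fin m) (Fin m) ℝ := Bᵀ * S * B + R with hMdef
  have hMpd : M.PosDef := Matrix.PosDef.posSemidef_add (hS.conjTranspose_mul_mul_same B) hR
  have hMsym : Mᵀ = M := hMpd.isHermitian
  have h1 : M * M⁻¹ = 1 := mul_nonsing_inv _ hMpd.det_pos.ne'.isUnit
  have h2 : M⁻¹ * M = 1 := nonsing_inv_mul _ hMpd.det_pos.ne'.isUnit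
  have h3 : (M⁻¹)ᵀ = M⁻¹ := by rw [transpose_nonsing_inv, hMsym]
  have hSsym : Sᵀ = S := hS.isHermitian
  set E : Matrix (Fin n) (Fin n) ℝ := A + B * K with hEdef
  set w : Fin m → ℝ := Bᵀ *ᵥ (S *ᵥ v) + Bᵀ *ᵥ (Eᵀ *ᵥ piv) with hwdef
  refine ⟨v ⬝ᵥ (S *ᵥ v) + 2 * (piv ⬝ᵥ (E *ᵥ v)) - w ⬝ᵥ (M⁻¹ *ᵥ w), fun x => ?_⟩
  have key : ∀ u : Fin m → ℝ,
      x ⬝ᵥ (Q *ᵥ x) + u ⬝ᵥ (R *ᵥ u)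
        + (A *ᵥ x + B *ᵥ u + v) ⬝ᵥ (S *ᵥ (A *ᵥ x + B *ᵥ u + v))
        + 2 * (piv ⬝ᵥ (E *ᵥ (A *ᵥ x + B *ᵥ u + v)))
      = (x ⬝ᵥ (S *ᵥ x) + 2 * ((Eᵀ *ᵥ piv + S *ᵥ v) ⬝ᵥ (E *ᵥ x))
          + (v ⬝ᵥ (S *ᵥ v) + 2 * (piv ⬝ᵥ (E *ᵥ v)) - w ⬝ᵥ (M⁻¹ *ᵥ w)))
        + (u - K *ᵥ x + M⁻¹ *ᵥ w) ⬝ᵥ (M *ᵥ (u - K *ᵥ x + M⁻¹ *ᵥ w)) := by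
    intro u
    have hK : K = -(M⁻¹ * Bᵀ * S * A) := by rw [hMdef]
    have h1' : ∀ (p : ℕ) (X : Matrix (Fin m) (Fin p) ℝ), M * (M⁻¹ * X) = X := fun _ X => by
      rw [← Matrix.mul_assoc, h1, Matrix.one_mul]
    have h2' : ∀ (p : ℕ) (X : Matrix (Fin m) (Fin p) ℝ), M⁻¹ * (M * X) = X := fun _ X => by
      rw [← Matrix.mul_assoc, h2, Matrix.one_mul]
    have hRx := congrArg (fun C : Matrix (Fin n) (Fin n) ℝ => x ⬝ᵥ (C *ᵥ x)) hRic
    simp only [hwdef, hEdef, hK]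
    simp only [mulVec_add, add_mulVec, sub_mulVec, mulVec_sub, neg_mulVec, mulVec_neg,
      mulVec_mulVec, dotProduct_add, add_dotProduct, dotProduct_sub, sub_dotProduct,
      dotProduct_neg, neg_dotProduct, shift, transpose_mul, transpose_add, transpose_neg,
      transpose_transpose, hSsym, hMsym, h3, Matrix.mul_assoc, Matrix.mul_neg, Matrix.neg_mul,
      h1, h2, h1', h2', Matrix.mul_one, Matrix.one_mul, Matrix.sub_mul, Matrix.mul_sub, Matrix.add_mul, Matrix.mul_add,
      dotProduct_comm] at hRx ⊢
    ring_nf at hRx ⊢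
    have e1 : u ⬝ᵥ ((Bᵀ * (S * A)) *ᵥ x) = x ⬝ᵥ ((Aᵀ * (S * B)) *ᵥ u) := by
      rw [sw]; simp only [transpose_mul, transpose_transpose, hSsym, Matrix.mul_assoc]
    have e2 : u ⬝ᵥ ((Bᵀ * S) *ᵥ v) = v ⬝ᵥ ((S * B) *ᵥ u) := by
      rw [sw]; simp only [transpose_mul, transpose_transpose, hSsym, Matrix.mul_assoc]
    have e3 : v ⬝ᵥ ((S * A) *ᵥ x) = x ⬝ᵥ ((Aᵀ * S) *ᵥ v) := by
      rw [sw]; simp only [transpose_mul, transpose_transpose, hSsym, Matrix.mul_assoc]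
    have e4 : piv ⬝ᵥ ((A * A) *ᵥ x) = x ⬝ᵥ ((Aᵀ * Aᵀ) *ᵥ piv) := by
      rw [sw]; simp only [transpose_mul, transpose_transpose, hSsym, Matrix.mul_assoc]
    have e5 : piv ⬝ᵥ ((B * (M⁻¹ * (Bᵀ * (S * (A * A))))) *ᵥ x)
        = x ⬝ᵥ ((Aᵀ * (Aᵀ * (S * (B * (M⁻¹ * Bᵀ))))) *ᵥ piv) := by
      rw [sw]; simp only [transpose_mul, transpose_transpose, hSsym, h3, Matrix.mul_assoc]
    have e6 : u ⬝ᵥ ((Bᵀ * Aᵀ) *ᵥ piv) = piv ⬝ᵥ ((A * B) *ᵥ u) := by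
      rw [sw]; simp only [transpose_mul, transpose_transpose, hSsym, Matrix.mul_assoc]
    have e7 : u ⬝ᵥ ((Bᵀ * (Aᵀ * (S * (B * (M⁻¹ * Bᵀ))))) *ᵥ piv)
        = piv ⬝ᵥ ((B * (M⁻¹ * (Bᵀ * (S * (A * B))))) *ᵥ u) := by
      rw [sw]; simp only [transpose_mul, transpose_transpose, hSsym, h3, Matrix.mul_assoc]
    have e8 : x ⬝ᵥ ((Aᵀ * (S * (B * (M⁻¹ * (Bᵀ * Aᵀ))))) *ᵥ piv)
        = piv ⬝ᵥ ((A * (B * (M⁻¹ * (Bᵀ * (S * A))))) *ᵥ x) := by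
      rw [sw]; simp only [transpose_mul, transpose_transpose, hSsym, h3, Matrix.mul_assoc]
    have e9 : x ⬝ᵥ ((Aᵀ * (S * (B * (M⁻¹ * (Bᵀ * (Aᵀ * (S * (B * (M⁻¹ * Bᵀ))))))))) *ᵥ piv)
        = piv ⬝ᵥ ((B * (M⁻¹ * (Bᵀ * (S * (A * (B * (M⁻¹ * (Bᵀ * (S * A))))))))) *ᵥ x) := by
      rw [sw]; simp only [transpose_mul, transpose_transpose, hSsym, h3, Matrix.mul_assoc]
    have e10 : x ⬝ᵥ ((Aᵀ * (S * (B * (M⁻¹ * (Bᵀ * S))))) *ᵥ v)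
        = v ⬝ᵥ ((S * (B * (M⁻¹ * (Bᵀ * (S * A))))) *ᵥ x) := by
      rw [sw]; simp only [transpose_mul, transpose_transpose, hSsym, h3, Matrix.mul_assoc]
    have eM : u ⬝ᵥ (M *ᵥ u) = u ⬝ᵥ (R *ᵥ u) + u ⬝ᵥ ((Bᵀ * (S * B)) *ᵥ u) := by
      rw [hMdef]
      simp only [add_mulVec, dotProduct_add, Matrix.mul_assoc]
      ring
    have eD : piv ⬝ᵥ (((A - B * (M⁻¹ * (Bᵀ * (S * A)))) * B) *ᵥ u)
        = piv ⬝ᵥ ((A * B) *ᵥ u) - piv ⬝ᵥ ((B * (M⁻¹ * (Bᵀ * (S * (A * B))))) *ᵥ u) := by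
      simp only [Matrix.sub_mul, sub_mulVec, dotProduct_sub, Matrix.mul_assoc]
    linarith [hRx, e1, e2, e3, e4, e5, e6, e7, e8, e9, e10, eM, eD]
  constructor
  · refine ⟨K *ᵥ x - M⁻¹ *ᵥ w, ?_⟩
    have hd : (K *ᵥ x - M⁻¹ *ᵥ w) - K *ᵥ x + M⁻¹ *ᵥ w = 0 := by abel
    dsimp only
    rw [key, hd]
    simp
  · rintro y ⟨u, rfl⟩
    dsimp only
    rw [key u]
    have := hMpd.posSemidef.dotProduct_mulVec_nonneg (u - K *ᵥ x + M⁻¹ *ᵥ w)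
    simp only [star_trivial] at this
    linarith
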